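/- Let h > 0, q₀, v₀, q₁, v₁ ∈ ℝⁿ, and let q(t) be the unique cubic polynomial with q(0)=q₀, q'(0)=v₀, q(h)=q₁, q'(h)=v₁. Then ∫₀ʰ ½‖q''(t)‖² dt = (6/h³)‖q₀ - q₁‖² + (6/h²)⟨q₀ - q₁, v₀ + v₁⟩ + (2/h)(‖v₀‖² + ⟨v₀, v₁⟩ + ‖v₁‖²). -/

import Mathlib

open scoped RealInnerProductSpace

/-- The exact discrete Lagrangian for `L(q,q̇,q̈) = ½‖q̈‖²`: the action of the cubic
interpolant with boundary data `(q₀,v₀,q₁,v₁)` on `[0,h]` equals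
`(6/h³)‖q₀-q₁‖² + (6/h²)⟨q₀-q₁, v₀+v₁⟩ + (2/h)(‖v₀‖² + ⟨v₀,v₁⟩ + ‖v₁‖²)`. -/
theorem exact_discrete_lagrangian_cubic (n : ℕ) (h : ℝ) (hh : 0 < h)
    (a b c d q₀ v₀ q₁ v₁ : EuclideanSpace ℝ (Fin n))
    (q : ℝ → EuclideanSpace ℝ (Fin n))
    (hq : ∀ t : ℝ, q t = t ^ 3 • a + t ^ 2 • b + t • c + d)
    (h0 : q 0 = q₀) (hd0 : deriv q 0 = v₀)
    (h1 : q h = q₁) (hd1 : deriv q h = v₁) :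
    (∫ t in (0 : ℝ)..h, (1 / 2 : ℝ) * ‖deriv (deriv q) t‖ ^ 2) =
      (6 / h ^ 3) * ‖q₀ - q₁‖ ^ 2 + (6 / h ^ 2) * ⟪q₀ - q₁, v₀ + v₁⟫ +
        (2 / h) * (‖v₀‖ ^ 2 + ⟪v₀, v₁⟫ + ‖v₁‖ ^ 2) := by
  have hqf : q = fun t : ℝ => t ^ 3 • a + t ^ 2 • b + t • c + d := funext hq
  subst hqf
  -- first derivative
  have hD1 : ∀ t : ℝ, HasDerivAt (fun t : ℝ => t ^ 3 • a + t ^ 2 • b + t • c + d)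
      ((3 * t ^ 2) • a + (2 * t) • b + c) t := by
    intro t
    have ha : HasDerivAt (fun t : ℝ => t ^ 3 • a) ((3 * t ^ 2) • a) t := by
      simpa using (hasDerivAt_pow 3 t).smul_const a
    have hb : HasDerivAt (fun t : ℝ => t ^ 2 • b) ((2 * t) • b) t := by
      simpa using (hasDerivAt_pow 2 t).smul_const b
    have hc : HasDerivAt (fun t : ℝ => t • c) c t := by
      simpa using (hasDerivAt_id t).smul_const c
    simpa using ((ha.add hb).add hc).add_const d
  have hD1' : deriv (fun t : ℝ => t ^ 3 • a + t ^ 2 • b + t • c + d)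
      = fun t : ℝ => (3 * t ^ 2) • a + (2 * t) • b + c := funext fun t => (hD1 t).deriv
  rw [hD1'] at hd0 hd1 ⊢
  -- second derivative
  have hD2 : ∀ t : ℝ, HasDerivAt (fun t : ℝ => (3 * t ^ 2) • a + (2 * t) • b + c)
      ((6 * t) • a + (2 : ℝ) • b) t := by
    intro t
    have ha : HasDerivAt (fun t : ℝ => (3 * t ^ 2) • a) ((6 * t) • a) t := by
      have := ((hasDerivAt_pow 2 t).const_mul (3 : ℝ)).smul_const a
      rw [show (6 * t : ℝ) = 3 * (2 * t) by ring]
      simpa using this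
    have hb : HasDerivAt (fun t : ℝ => (2 * t) • b) ((2 : ℝ) • b) t := by
      have := ((hasDerivAt_id t).const_mul (2 : ℝ)).smul_const b
      simpa using this
    simpa using (ha.add hb).add_const c
  have hD2' : deriv (fun t : ℝ => (3 * t ^ 2) • a + (2 * t) • b + c)
      = fun t : ℝ => (6 * t) • a + (2 : ℝ) • b := funext fun t => (hD2 t).deriv
  rw [hD2']
  -- boundary data
  simp only at h0 hd0 h1 hd1
  rw [show (0 : ℝ) ^ 3 • a + (0 : ℝ) ^ 2 • b + (0 : ℝ) • c + d = d by simp] at h0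
  rw [show (3 * (0 : ℝ) ^ 2) • a + (2 * (0 : ℝ)) • b + c = c by simp] at hd0
  subst h0 hd0 h1 hd1
  -- integrand as a scalar polynomial
  have key : ∀ t : ℝ, (1 / 2 : ℝ) * ‖(6 * t) • a + (2 : ℝ) • b‖ ^ 2
      = 18 * t ^ 2 * ⟪a, a⟫ + 12 * t * ⟪a, b⟫ + 2 * ⟪b, b⟫ := by
    intro t
    rw [← real_inner_self_eq_norm_sq]
    simp only [inner_add_left, inner_add_right, real_inner_smul_left, real_inner_smul_right,
      real_inner_comm b a]
    ring
  rw [intervalIntegral.integral_congr (g := fun t : ℝ =>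
      18 * t ^ 2 * ⟪a, a⟫ + 12 * t * ⟪a, b⟫ + 2 * ⟪b, b⟫) (fun t _ => key t)]
  -- integrate by FTC
  have hint : (∫ t in (0 : ℝ)..h, (18 * t ^ 2 * ⟪a, a⟫ + 12 * t * ⟪a, b⟫ + 2 * ⟪b, b⟫))
      = 6 * h ^ 3 * ⟪a, a⟫ + 6 * h ^ 2 * ⟪a, b⟫ + 2 * h * ⟪b, b⟫ := by
    have hF : ∀ t ∈ Set.uIcc (0 : ℝ) h, HasDerivAt
        (fun t : ℝ => 6 * t ^ 3 * ⟪a, a⟫ + 6 * t ^ 2 * ⟪a, b⟫ + 2 * t * ⟪b, b⟫)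
        (18 * t ^ 2 * ⟪a, a⟫ + 12 * t * ⟪a, b⟫ + 2 * ⟪b, b⟫) t := by
      intro t _
      have h3 : HasDerivAt (fun t : ℝ => 6 * t ^ 3 * ⟪a, a⟫) (18 * t ^ 2 * ⟪a, a⟫) t := by
        have := ((hasDerivAt_pow 3 t).const_mul (6 : ℝ)).mul_const (⟪a, a⟫ : ℝ)
        refine this.congr_deriv ?_; push_cast; ring
      have h2 : HasDerivAt (fun t : ℝ => 6 * t ^ 2 * ⟪a, b⟫) (12 * t * ⟪a, b⟫) t := by
        have := ((hasDerivAt_pow 2 t).const_mul (6 : ℝ)).mul_const (⟪a, b⟫ : ℝ)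
        refine this.congr_deriv ?_; push_cast; ring
      have h1 : HasDerivAt (fun t : ℝ => 2 * t * ⟪b, b⟫) (2 * ⟪b, b⟫) t := by
        have := ((hasDerivAt_id t).const_mul (2 : ℝ)).mul_const (⟪b, b⟫ : ℝ)
        refine this.congr_deriv ?_; ring
      exact (h3.add h2).add h1
    have hcont : IntervalIntegrable
        (fun t : ℝ => 18 * t ^ 2 * ⟪a, a⟫ + 12 * t * ⟪a, b⟫ + 2 * ⟪b, b⟫)
        MeasureTheory.volume 0 h := by
      apply Continuous.intervalIntegrable; fun_prop
    rw [intervalIntegral.integral_eq_sub_of_hasDerivAt hF hcont]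
    ring
  rw [hint]
  -- final algebra
  have hne : h ≠ 0 := ne_of_gt hh
  rw [show d - (h ^ 3 • a + h ^ 2 • b + h • c + d) = -(h ^ 3 • a + h ^ 2 • b + h • c) by abel]
  simp only [← real_inner_self_eq_norm_sq, inner_add_left, inner_add_right, inner_neg_left,
    inner_neg_right, real_inner_smul_left, real_inner_smul_right, real_inner_comm b a,
    real_inner_comm c a, real_inner_comm c b]
  field_simp
  ring
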